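/- (Method 2 is kinetic-energy diminishing.) Let V be a real inner product space, let λ₀₁, λ₁₀ ∈ [0,1], let η₀, η₁ > 0 be real numbers with η₀' := (1−λ₀₁)·η₀ + λ₁₀·η₁ > 0 and η₁' := (1−λ₁₀)·η₁ + λ₀₁·η₀ > 0, and let u₀, u₁ ∈ V. Define u₀' = ((1−λ₀₁)·η₀·u₀ + λ₁₀·η₁·u₁)/η₀' and u₁' = ((1−λ₁₀)·η₁·u₁ + λ₀₁·η₀·u₀)/η₁'. Then ½·η₀'·‖u₀'‖² + ½·η₁'·‖u₁'‖² ≤ ½·η₀·‖u₀‖² + ½·η₁·‖u₁‖²; that is, the total kinetic energy never increases under the mass-weighted transfer update. -/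

import Mathlib

lemma aux_norm_sq_convex {V : Type*} [NormedAddCommGroup V] [InnerProductSpace ℝ V]
    (a b : ℝ) (ha : 0 ≤ a) (hb : 0 ≤ b) (x y : V) :
    ‖a • x + b • y‖^2 ≤ (a + b) * (a * ‖x‖^2 + b * ‖y‖^2) := by
  have h := norm_add_sq_real (a • x) (b • y)
  rw [real_inner_smul_left, real_inner_smul_right, norm_smul, norm_smul] at h
  have hcs : (inner ℝ x y : ℝ) ≤ ‖x‖ * ‖y‖ := real_inner_le_norm x y
  simp only [Real.norm_eq_abs, abs_of_nonneg ha, abs_of_nonneg hb] at h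
  nlinarith [mul_nonneg ha hb, sq_nonneg (‖x‖ - ‖y‖)]

/-- Method 2 is kinetic-energy diminishing: the total kinetic energy never
increases under the mass-weighted transfer update. -/
theorem method2_kinetic_energy_diminishing
    {V : Type*} [NormedAddCommGroup V] [InnerProductSpace ℝ V]
    (lam01 lam10 η0 η1 : ℝ)
    (h01l : 0 ≤ lam01) (h01u : lam01 ≤ 1)
    (h10l : 0 ≤ lam10) (h10u : lam10 ≤ 1)
    (hη0 : 0 < η0) (hη1 : 0 < η1)
    (η0' η1' : ℝ)
    (hη0' : η0' = (1 - lam01) * η0 + lam10 * η1)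
    (hη1' : η1' = (1 - lam10) * η1 + lam01 * η0)
    (hη0'pos : 0 < η0') (hη1'pos : 0 < η1')
    (u0 u1 u0' u1' : V)
    (hu0' : u0' = (η0'⁻¹) • ((1 - lam01) • (η0 • u0) + lam10 • (η1 • u1)))
    (hu1' : u1' = (η1'⁻¹) • ((1 - lam10) • (η1 • u1) + lam01 • (η0 • u0))) :
    (1/2) * η0' * ‖u0'‖^2 + (1/2) * η1' * ‖u1'‖^2
      ≤ (1/2) * η0 * ‖u0‖^2 + (1/2) * η1 * ‖u1‖^2 := by
  set a0 : ℝ := (1 - lam01) * η0 with ha0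
  set b0 : ℝ := lam10 * η1 with hb0
  set a1 : ℝ := (1 - lam10) * η1 with ha1
  set b1 : ℝ := lam01 * η0 with hb1
  have ha0n : 0 ≤ a0 := mul_nonneg (by linarith) hη0.le
  have hb0n : 0 ≤ b0 := mul_nonneg h10l hη1.le
  have ha1n : 0 ≤ a1 := mul_nonneg (by linarith) hη1.le
  have hb1n : 0 ≤ b1 := mul_nonneg h01l hη0.le
  have h0 : ‖a0 • u0 + b0 • u1‖^2 ≤ (a0 + b0) * (a0 * ‖u0‖^2 + b0 * ‖u1‖^2) :=
    aux_norm_sq_convex a0 b0 ha0n hb0n u0 u1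
  have h1 : ‖a1 • u1 + b1 • u0‖^2 ≤ (a1 + b1) * (a1 * ‖u1‖^2 + b1 * ‖u0‖^2) :=
    aux_norm_sq_convex a1 b1 ha1n hb1n u1 u0
  have w0 : (1 - lam01) • (η0 • u0) + lam10 • (η1 • u1) = a0 • u0 + b0 • u1 := by
    rw [smul_smul, smul_smul]
  have w1 : (1 - lam10) • (η1 • u1) + lam01 • (η0 • u0) = a1 • u1 + b1 • u0 := by
    rw [smul_smul, smul_smul]
  have hn0 : ‖u0'‖^2 = η0'⁻¹^2 * ‖a0 • u0 + b0 • u1‖^2 := by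
    rw [hu0', w0, norm_smul, mul_pow, Real.norm_eq_abs, sq_abs]
  have hn1 : ‖u1'‖^2 = η1'⁻¹^2 * ‖a1 • u1 + b1 • u0‖^2 := by
    rw [hu1', w1, norm_smul, mul_pow, Real.norm_eq_abs, sq_abs]
  have k0 : (1/2) * η0' * ‖u0'‖^2 ≤ (1/2) * (a0 * ‖u0‖^2 + b0 * ‖u1‖^2) := by
    rw [hn0]
    have hrw : (1/2) * η0' * (η0'⁻¹^2 * ‖a0 • u0 + b0 • u1‖^2)
        = 1/2 * η0'⁻¹ * ‖a0 • u0 + b0 • u1‖^2 := by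
      field_simp
    rw [hrw]
    calc 1/2 * η0'⁻¹ * ‖a0 • u0 + b0 • u1‖^2
        ≤ 1/2 * η0'⁻¹ * ((a0 + b0) * (a0 * ‖u0‖^2 + b0 * ‖u1‖^2)) := by
          apply mul_le_mul_of_nonneg_left h0; positivity
      _ = 1/2 * (a0 * ‖u0‖^2 + b0 * ‖u1‖^2) := by
          rw [hη0', mul_assoc, inv_mul_cancel_left₀ (ne_of_gt (hη0' ▸ hη0'pos))]
  have k1 : (1/2) * η1' * ‖u1'‖^2 ≤ (1/2) * (a1 * ‖u1‖^2 + b1 * ‖u0‖^2) := by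
    rw [hn1]
    have hrw : (1/2) * η1' * (η1'⁻¹^2 * ‖a1 • u1 + b1 • u0‖^2)
        = 1/2 * η1'⁻¹ * ‖a1 • u1 + b1 • u0‖^2 := by
      field_simp
    rw [hrw]
    calc 1/2 * η1'⁻¹ * ‖a1 • u1 + b1 • u0‖^2
        ≤ 1/2 * η1'⁻¹ * ((a1 + b1) * (a1 * ‖u1‖^2 + b1 * ‖u0‖^2)) := by
          apply mul_le_mul_of_nonneg_left h1; positivity
      _ = 1/2 * (a1 * ‖u1‖^2 + b1 * ‖u0‖^2) := by
          rw [hη1', mul_assoc, inv_mul_cancel_left₀ (ne_of_gt (hη1' ▸ hη1'pos))]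
  have hsum : (1/2) * (a0 * ‖u0‖^2 + b0 * ‖u1‖^2) + (1/2) * (a1 * ‖u1‖^2 + b1 * ‖u0‖^2)
      = (1/2) * η0 * ‖u0‖^2 + (1/2) * η1 * ‖u1‖^2 := by
    rw [ha0, hb0, ha1, hb1]; ring
  linarith
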